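/- (Third Lie derivative of the distance constraint for the unicycle: u₁ appears, together with the derivative of u₂.) Along any solution of the unicycle model in which additionally u₂ is differentiable, ρ is three times differentiable and for all t, ρ'''(t) = (v q/ρ)·u₁ + (p/(Mρ))·u₂' + (u₂/M)·((3v + 2φq)/ρ − 3v p²/ρ³) − v φ² p/ρ − 3v³ p/ρ³ − 3v² φ p q/ρ³ + 3v³ p³/ρ⁵ (all functions evaluated at t). In particular u₁ appears linearly with coefficient v q/ρ and the derivative u₂' of u₂ appears with coefficient p/(Mρ), so the relative degree of the safety constraint ρ − r ≥ 0 with respect to u₁ is 3 and the relative degree set is S = {3, 2}. -/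

import Mathlib

set_option maxHeartbeats 2000000


/-- Third Lie derivative of the distance constraint for the unicycle
(with `u₂` differentiable): `u₁` appears linearly with coefficient `v q / ρ`
and the derivative of `u₂` appears with coefficient `p/(M ρ)`. -/
theorem unicycle_rho_third_derivative
    (M : ℝ) (hM : 0 < M)
    (x y v θ φ u₁ u₂ : ℝ → ℝ)
    (hx : Differentiable ℝ x) (hy : Differentiable ℝ y)
    (hv : Differentiable ℝ v) (hθ : Differentiable ℝ θ)
    (hφ : Differentiable ℝ φ)
    (hu₁ : Continuous u₁) (hu₂ : Continuous u₂)
    (hdx : ∀ t, deriv x t = v t * Real.cos (θ t))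
    (hdy : ∀ t, deriv y t = v t * Real.sin (θ t))
    (hdv : ∀ t, deriv v t = u₂ t / M)
    (hdθ : ∀ t, deriv θ t = φ t)
    (hdφ : ∀ t, deriv φ t = u₁ t)
    (hu₂d : Differentiable ℝ u₂)
    (x₀ y₀ : ℝ) (ρ p q : ℝ → ℝ)
    (hρ : ∀ t, ρ t = Real.sqrt ((x t - x₀) ^ 2 + (y t - y₀) ^ 2))
    (hp : ∀ t, p t = (x t - x₀) * Real.cos (θ t) + (y t - y₀) * Real.sin (θ t))
    (hq : ∀ t, q t = -(x t - x₀) * Real.sin (θ t) + (y t - y₀) * Real.cos (θ t))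
    (hρpos : ∀ t, 0 < ρ t)
    : (Differentiable ℝ ρ ∧ Differentiable ℝ (deriv ρ) ∧
        Differentiable ℝ (deriv (deriv ρ))) ∧
      ∀ t, deriv (deriv (deriv ρ)) t =
        (v t * q t / ρ t) * u₁ t
          + (p t / (M * ρ t)) * deriv u₂ t
          + (u₂ t / M) * ((3 * v t + 2 * φ t * q t) / ρ t
              - 3 * v t * (p t) ^ 2 / (ρ t) ^ 3)
          - v t * (φ t) ^ 2 * p t / ρ t
          - 3 * (v t) ^ 3 * p t / (ρ t) ^ 3
          - 3 * (v t) ^ 2 * φ t * p t * q t / (ρ t) ^ 3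
          + 3 * (v t) ^ 3 * (p t) ^ 3 / (ρ t) ^ 5 := by
  have hMne : M ≠ 0 := hM.ne'
  have hρne : ∀ t, ρ t ≠ 0 := fun t => (hρpos t).ne'
  have hxd : ∀ t, HasDerivAt x (v t * Real.cos (θ t)) t := fun t => by
    have h := (hx t).hasDerivAt; rwa [hdx t] at h
  have hyd : ∀ t, HasDerivAt y (v t * Real.sin (θ t)) t := fun t => by
    have h := (hy t).hasDerivAt; rwa [hdy t] at h
  have hvd : ∀ t, HasDerivAt v (u₂ t / M) t := fun t => by
    have h := (hv t).hasDerivAt; rwa [hdv t] at h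
  have hθd : ∀ t, HasDerivAt θ (φ t) t := fun t => by
    have h := (hθ t).hasDerivAt; rwa [hdθ t] at h
  have hφd : ∀ t, HasDerivAt φ (u₁ t) t := fun t => by
    have h := (hφ t).hasDerivAt; rwa [hdφ t] at h
  have hu₂dd : ∀ t, HasDerivAt u₂ (deriv u₂ t) t := fun t => (hu₂d t).hasDerivAt
  have hf : ∀ t, 0 < (x t - x₀) ^ 2 + (y t - y₀) ^ 2 := by
    intro t
    rcases lt_or_eq_of_le (by positivity : (0:ℝ) ≤ (x t - x₀) ^ 2 + (y t - y₀) ^ 2) with h | h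
    · exact h
    · exfalso; have := hρpos t; rw [hρ t, ← h, Real.sqrt_zero] at this; exact lt_irrefl 0 this
  have hpd : ∀ t, HasDerivAt p (v t + φ t * q t) t := fun t => by
    have h := (((hxd t).sub_const x₀).mul (hθd t).cos).add
      (((hyd t).sub_const y₀).mul (hθd t).sin)
    have hfun : p = fun s => (x s - x₀) * Real.cos (θ s) + (y s - y₀) * Real.sin (θ s) :=
      funext hp
    rw [hfun]
    refine h.congr_deriv (Eq.symm ?_)
    rw [hq t]
    linear_combination (-(v t)) * (Real.sin_sq_add_cos_sq (θ t))
  have hqd : ∀ t, HasDerivAt q (-(φ t * p t)) t := fun t => by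
    have h := ((((hxd t).sub_const x₀).neg).mul (hθd t).sin).add
      (((hyd t).sub_const y₀).mul (hθd t).cos)
    have hfun : q = fun s => -(x s - x₀) * Real.sin (θ s) + (y s - y₀) * Real.cos (θ s) :=
      funext hq
    rw [hfun]
    refine h.congr_deriv (Eq.symm ?_)
    rw [hp t]; simp only [Pi.neg_apply]; ring
  have hρd : ∀ t, HasDerivAt ρ (v t * p t / ρ t) t := fun t => by
    have h := ((((hxd t).sub_const x₀).pow 2).add (((hyd t).sub_const y₀).pow 2)).sqrt
      (hf t).ne'
    have hfun : ρ = fun s => Real.sqrt ((x s - x₀) ^ 2 + (y s - y₀) ^ 2) := funext hρ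
    rw [hfun]
    refine h.congr_deriv (Eq.symm ?_)
    have hs : Real.sqrt ((x t - x₀) ^ 2 + (y t - y₀) ^ 2) ≠ 0 := by
      rw [← hρ t]; exact hρne t
    simp only [hp t, Pi.add_apply, Pi.pow_apply, Nat.reduceSub, ← hρ t]
    rw [div_eq_div_iff (hρne t) (mul_ne_zero two_ne_zero (hρne t))]
    ring
  have hρdiff : Differentiable ℝ ρ := fun t => (hρd t).differentiableAt
  have hpdiff : Differentiable ℝ p := fun t => (hpd t).differentiableAt
  have hqdiff : Differentiable ℝ q := fun t => (hqd t).differentiableAt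
  have hρ' : deriv ρ = fun t => v t * p t / ρ t := funext fun t => (hρd t).deriv
  have h2d : ∀ t, HasDerivAt (deriv ρ)
      (((u₂ t / M * p t + v t * (v t + φ t * q t)) * ρ t
        - v t * p t * (v t * p t / ρ t)) / ρ t ^ 2) t := fun t => by
    rw [hρ']
    exact ((hvd t).mul (hpd t)).div (hρd t) (hρne t)
  have h2' : deriv (deriv ρ) = fun s =>
      ((u₂ s / M * p s + v s * (v s + φ s * q s)) * ρ s
        - v s * p s * (v s * p s / ρ s)) / ρ s ^ 2 :=
    funext fun t => (h2d t).deriv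
  refine ⟨⟨hρdiff, fun t => (h2d t).differentiableAt, ?_⟩, ?_⟩
  · rw [h2']
    refine Differentiable.div ?_ (hρdiff.pow 2) (fun t => pow_ne_zero 2 (hρne t))
    exact ((((hu₂d.div_const M).mul hpdiff).add
        (hv.mul (hv.add (hφ.mul hqdiff)))).mul hρdiff).sub
      ((hv.mul hpdiff).mul ((hv.mul hpdiff).div hρdiff hρne))
  · intro t
    rw [h2']
    have hA := ((hu₂dd t).div_const M).mul (hpd t)
    have hB := (hvd t).add ((hφd t).mul (hqd t))
    have hC := (hvd t).mul hB
    have hE := (hvd t).mul (hpd t)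
    have hF := hE.div (hρd t) (hρne t)
    have hnum := ((hA.add hC).mul (hρd t)).sub (hE.mul hF)
    have hden := (hρd t).pow 2
    refine (hnum.div hden (pow_ne_zero 2 (hρne t))).deriv.trans ?_
    have h1 := hρne t
    simp only [Pi.mul_apply, Pi.add_apply, Pi.sub_apply, Pi.div_apply, Pi.pow_apply]
    field_simp
    ring
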